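/- (Willems' Fundamental Lemma, as used by the paper.) Let (u^d, y^d) be a length-T trajectory of a discrete-time LTI system with matrices A ∈ ℝ^{n×n}, B ∈ ℝ^{n×m}, C ∈ ℝ^{p×n}, D ∈ ℝ^{p×m}, where (A, B) is controllable (the matrix [B, AB, …, A^{n−1}B] has rank n) and (A, C) is observable (the matrix col(C, CA, …, CA^{n−1}) has rank n). Let L ≥ 1 satisfy rank(O_L) = n, where O_L = col(C, CA, …, CA^{L−1}). If the input u^d is persistently exciting of order L + n, i.e., the depth-(L+n) block Hankel matrix H_{L+n}(u^d) has full row rank m(L+n), then the column space of the stacked Hankel matrix col(H_L(u^d), H_L(y^d)) equals the subspace of all stacked length-L trajectories col(u, y) of the system; equivalently, rank(col(H_L(u^d), H_L(y^d))) = mL + n. -/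

import Mathlib

/-- Depth-`L` block Hankel matrix of a sequence `w : Fin T → Fin q → ℝ`:
the `(i, j)`-th `q`-dimensional block is `w (i + j)`. -/
def Hankel {T q : ℕ} (L : ℕ) (hLT : L ≤ T) (w : Fin T → Fin q → ℝ) :
    Matrix (Fin L × Fin q) (Fin (T - L + 1)) ℝ :=
  fun i j => w ⟨(i.1 : ℕ) + (j : ℕ), by have h1 := i.1.isLt; have h2 := j.isLt; omega⟩ i.2

/-- Flatten `w : Fin L → Fin q → ℝ` into the vector `col(w 0, …, w (L-1)) ∈ ℝ^(qL)`. -/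
def flatten {L q : ℕ} (w : Fin L → Fin q → ℝ) : Fin (q * L) → ℝ :=
  fun i =>
    have hq : 0 < q := by
      have hpos := i.pos
      rcases Nat.eq_zero_or_pos q with h | h
      · subst h; simp at hpos
      · exact h
    w ⟨(i : ℕ) / q, by
        rw [Nat.div_lt_iff_lt_mul hq, Nat.mul_comm L q]; exact i.isLt⟩
      ⟨(i : ℕ) % q, Nat.mod_lt _ hq⟩

/-- Stacked vector `col(u, y) ∈ ℝ^(mL + pL)`, listing `u 0, …, u (L-1)` followed by
`y 0, …, y (L-1)`. -/
def stackVec {L m p : ℕ} (u : Fin L → Fin m → ℝ) (y : Fin L → Fin p → ℝ) :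
    Fin (m * L + p * L) → ℝ :=
  Fin.append (flatten u) (flatten y)

/-- `(u, y)` is a length-`L` input–output trajectory of the LTI system `(A, B, C, D)`:
there is a state sequence `x` with `x (k+1) = A x k + B u k` and `y k = C x k + D u k`. -/
def IsTrajectory {n m p : ℕ} (A : Matrix (Fin n) (Fin n) ℝ) (B : Matrix (Fin n) (Fin m) ℝ)
    (C : Matrix (Fin p) (Fin n) ℝ) (D : Matrix (Fin p) (Fin m) ℝ)
    {L : ℕ} (u : Fin L → Fin m → ℝ) (y : Fin L → Fin p → ℝ) : Prop :=
  ∃ x : Fin (L + 1) → Fin n → ℝ,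
    (∀ k : Fin L, x k.succ = A.mulVec (x k.castSucc) + B.mulVec (u k)) ∧
    (∀ k : Fin L, y k = C.mulVec (x k.castSucc) + D.mulVec (u k))

/-- Stacked block Hankel matrix `col(H_L(u), H_L(y))` of depth `L`: its `j`-th column is
the stacked vector of the length-`L` window of `(u, y)` starting at time `j`, i.e. the
`(i, j)`-th block entries are `u (i + j)` and `y (i + j)`. -/
def stackedHankel {T m p : ℕ} (L : ℕ) (hLT : L ≤ T)
    (u : Fin T → Fin m → ℝ) (y : Fin T → Fin p → ℝ) :
    Matrix (Fin (m * L + p * L)) (Fin (T - L + 1)) ℝ :=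
  fun i j =>
    stackVec (fun k : Fin L => u ⟨(k : ℕ) + (j : ℕ), by have := k.isLt; have := j.isLt; omega⟩)
      (fun k : Fin L => y ⟨(k : ℕ) + (j : ℕ), by have := k.isLt; have := j.isLt; omega⟩) i

/-- Depth-`L` extended observability matrix `O_L = col(C, CA, …, CA^(L-1))`. -/
def obsMat {n p : ℕ} (A : Matrix (Fin n) (Fin n) ℝ) (C : Matrix (Fin p) (Fin n) ℝ)
    (L : ℕ) : Matrix (Fin L × Fin p) (Fin n) ℝ :=
  fun i j => (C * A ^ (i.1 : ℕ)) i.2 j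

/-- Controllability matrix `[B, AB, …, A^(n-1) B]`. -/
def ctrbMat {n m : ℕ} (A : Matrix (Fin n) (Fin n) ℝ) (B : Matrix (Fin n) (Fin m) ℝ) :
    Matrix (Fin n) (Fin n × Fin m) ℝ :=
  fun i j => (A ^ (j.1 : ℕ) * B) i j.2
-- generic rank lemmas
section RankLemmas
set_option linter.unusedSectionVars false
open Matrix
variable {ι κ : Type} [Fintype ι] [Fintype κ] [DecidableEq ι] [DecidableEq κ]

lemma rank_eq_finrank_range' (M : Matrix ι κ ℝ) :
    M.rank = Module.finrank ℝ (LinearMap.range M.mulVecLin) := rfl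

lemma fullCol_inj (M : Matrix ι κ ℝ) (h : M.rank = Fintype.card κ) :
    Function.Injective M.mulVecLin := by
  rw [← LinearMap.ker_eq_bot]
  have h2 := LinearMap.finrank_range_add_finrank_ker (M.mulVecLin)
  rw [Module.finrank_fintype_fun_eq_card] at h2
  have h3 : Module.finrank ℝ (LinearMap.range M.mulVecLin) = M.rank := rfl
  have : Module.finrank ℝ (LinearMap.ker M.mulVecLin) = 0 := by omega
  exact Submodule.finrank_eq_zero.mp this

lemma fullRow_vecMul_eq_zero (M : Matrix ι κ ℝ) (h : M.rank = Fintype.card ι)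
    (v : ι → ℝ) (hv : v ᵥ* M = 0) : v = 0 := by
  have ht : (Mᵀ).rank = Fintype.card ι := by rw [Matrix.rank_transpose]; exact h
  have hinj := fullCol_inj Mᵀ ht
  have h0 : Mᵀ.mulVecLin v = 0 := by
    simp [Matrix.mulVecLin_apply, Matrix.mulVec_transpose, hv]
  have := hinj (a₂ := 0) (by simpa using h0)
  simpa using this

lemma fullRow_of_vecMul (M : Matrix ι κ ℝ)
    (h : ∀ v : ι → ℝ, v ᵥ* M = 0 → v = 0) : M.rank = Fintype.card ι := by
  rw [← Matrix.rank_transpose]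
  have hker : LinearMap.ker Mᵀ.mulVecLin = ⊥ := by
    rw [LinearMap.ker_eq_bot']
    intro v hv
    exact h v (by simpa using hv)
  have h2 := LinearMap.finrank_range_add_finrank_ker (Mᵀ.mulVecLin)
  rw [Module.finrank_fintype_fun_eq_card, hker] at h2
  simp at h2
  have h3 : (Mᵀ).rank = Module.finrank ℝ (LinearMap.range Mᵀ.mulVecLin) := rfl
  omega

lemma fullRow_surj (M : Matrix ι κ ℝ) (h : M.rank = Fintype.card ι) :
    Function.Surjective M.mulVecLin := by
  rw [← LinearMap.range_eq_top]
  apply Submodule.eq_top_of_finrank_eq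
  rw [Module.finrank_fintype_fun_eq_card]
  exact h

end RankLemmas
-- solution machinery
open Matrix

variable {n m p : ℕ} (A : Matrix (Fin n) (Fin n) ℝ) (B : Matrix (Fin n) (Fin m) ℝ)
  (C : Matrix (Fin p) (Fin n) ℝ) (D : Matrix (Fin p) (Fin m) ℝ)

/-- Solution of the state recursion from initial state `x0` under input `u`. -/
def xsol (x0 : Fin n → ℝ) (u : ℕ → Fin m → ℝ) : ℕ → Fin n → ℝ
  | 0 => x0
  | k+1 => A.mulVec (xsol x0 u k) + B.mulVec (u k)

lemma xsol_congr (x0 : Fin n → ℝ) (u u' : ℕ → Fin m → ℝ) (k : ℕ)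
    (h : ∀ t < k, u t = u' t) : xsol A B x0 u k = xsol A B x0 u' k := by
  induction k with
  | zero => rfl
  | succ k ih =>
    simp only [xsol, ih (fun t ht => h t (by omega)), h k (by omega)]

lemma xsol_add (x0 x0' : Fin n → ℝ) (u u' : ℕ → Fin m → ℝ) (k : ℕ) :
    xsol A B (x0 + x0') (u + u') k = xsol A B x0 u k + xsol A B x0' u' k := by
  induction k with
  | zero => rfl
  | succ k ih => simp [xsol, ih, Matrix.mulVec_add]; abel

lemma xsol_smul (c : ℝ) (x0 : Fin n → ℝ) (u : ℕ → Fin m → ℝ) (k : ℕ) :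
    xsol A B (c • x0) (c • u) k = c • xsol A B x0 u k := by
  induction k with
  | zero => rfl
  | succ k ih => simp [xsol, ih, Matrix.mulVec_smul]

lemma xsol_zero_input (x0 : Fin n → ℝ) (k : ℕ) :
    xsol A B x0 0 k = (A ^ k).mulVec x0 := by
  induction k with
  | zero => simp [xsol]
  | succ k ih => simp [xsol, ih, pow_succ', ← Matrix.mulVec_mulVec]
-- flatten / stackVec lemmas
lemma flatten_mk {L q : ℕ} (w : Fin L → Fin q → ℝ) (k : Fin L) (r : Fin q)
    (h : (k : ℕ) * q + (r : ℕ) < q * L) :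
    flatten w ⟨(k : ℕ) * q + (r : ℕ), h⟩ = w k r := by
  have hq : 0 < q := r.pos
  have hdiv : ((k : ℕ) * q + (r : ℕ)) / q = (k : ℕ) := by
    rw [add_comm, Nat.add_mul_div_right _ _ hq, Nat.div_eq_of_lt r.isLt, zero_add]
  have hmod : ((k : ℕ) * q + (r : ℕ)) % q = (r : ℕ) := by
    rw [add_comm, Nat.add_mul_mod_self_right, Nat.mod_eq_of_lt r.isLt]
  simp only [flatten]
  congr 1 <;> [skip; exact Fin.ext hmod]
  exact Fin.ext hdiv

lemma idx_bound {L q : ℕ} (k : Fin L) (r : Fin q) : (k : ℕ) * q + (r : ℕ) < q * L := by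
  have h1 := k.isLt; have h2 := r.isLt
  calc (k : ℕ) * q + (r : ℕ) < ((k : ℕ) + 1) * q := by rw [add_mul, one_mul]; omega
  _ ≤ L * q := Nat.mul_le_mul_right q (by omega)
  _ = q * L := Nat.mul_comm _ _

lemma flatten_inj {L q : ℕ} {w w' : Fin L → Fin q → ℝ} (h : flatten w = flatten w') :
    w = w' := by
  funext k r
  have := congrFun h ⟨(k : ℕ) * q + (r : ℕ), idx_bound k r⟩
  rwa [flatten_mk, flatten_mk] at this

lemma flatten_add {L q : ℕ} (w w' : Fin L → Fin q → ℝ) :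
    flatten (w + w') = flatten w + flatten w' := rfl

lemma flatten_smul {L q : ℕ} (c : ℝ) (w : Fin L → Fin q → ℝ) :
    flatten (c • w) = c • flatten w := rfl

lemma append_add {a b : ℕ} (f f' : Fin a → ℝ) (g g' : Fin b → ℝ) :
    Fin.append (f + f') (g + g') = Fin.append f g + Fin.append f' g' := by
  funext i
  induction i using Fin.addCases with
  | left i => simp [Fin.append_left]
  | right i => simp [Fin.append_right]

lemma append_smul {a b : ℕ} (c : ℝ) (f : Fin a → ℝ) (g : Fin b → ℝ) :
    Fin.append (c • f) (c • g) = c • Fin.append f g := by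
  funext i
  induction i using Fin.addCases with
  | left i => simp [Fin.append_left]
  | right i => simp [Fin.append_right]

lemma stackVec_add {L m p : ℕ} (u u' : Fin L → Fin m → ℝ) (y y' : Fin L → Fin p → ℝ) :
    stackVec (u + u') (y + y') = stackVec u y + stackVec u' y' := by
  simp [stackVec, flatten_add, append_add]

lemma stackVec_smul {L m p : ℕ} (c : ℝ) (u : Fin L → Fin m → ℝ) (y : Fin L → Fin p → ℝ) :
    stackVec (c • u) (c • y) = c • stackVec u y := by
  simp [stackVec, flatten_smul, append_smul]

lemma stackVec_inj {L m p : ℕ} {u u' : Fin L → Fin m → ℝ} {y y' : Fin L → Fin p → ℝ}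
    (h : stackVec u y = stackVec u' y') : u = u' ∧ y = y' := by
  have hu : flatten u = flatten u' := by
    funext i
    have := congrFun h (Fin.castAdd (p * L) i)
    simpa [stackVec, Fin.append_left] using this
  have hy : flatten y = flatten y' := by
    funext i
    have := congrFun h (Fin.natAdd (m * L) i)
    simpa [stackVec, Fin.append_right] using this
  exact ⟨flatten_inj hu, flatten_inj hy⟩
/-- Extend a finitely-indexed input by zero. -/
def extu {L q : ℕ} (u : Fin L → Fin q → ℝ) : ℕ → Fin q → ℝ :=
  fun k => if h : k < L then u ⟨k, h⟩ else 0

lemma extu_lt {L q : ℕ} (u : Fin L → Fin q → ℝ) (k : ℕ) (h : k < L) :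
    extu u k = u ⟨k, h⟩ := dif_pos h

lemma isTrajectory_iff {n m p L : ℕ} (A : Matrix (Fin n) (Fin n) ℝ)
    (B : Matrix (Fin n) (Fin m) ℝ) (C : Matrix (Fin p) (Fin n) ℝ)
    (D : Matrix (Fin p) (Fin m) ℝ) (u : Fin L → Fin m → ℝ) (y : Fin L → Fin p → ℝ) :
    IsTrajectory A B C D u y ↔
      ∃ x0 : Fin n → ℝ, ∀ k : Fin L,
        y k = C.mulVec (xsol A B x0 (extu u) (k : ℕ)) + D.mulVec (u k) := by
  constructor
  · rintro ⟨x, hx, hy⟩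
    refine ⟨x 0, fun k => ?_⟩
    have key : ∀ j : ℕ, ∀ hj : j < L + 1, x ⟨j, hj⟩ = xsol A B (x 0) (extu u) j := by
      intro j
      induction j with
      | zero => intro _; rfl
      | succ j ih =>
        intro hj
        have h1 := hx ⟨j, by omega⟩
        have h2 : (⟨j + 1, hj⟩ : Fin (L + 1)) = Fin.succ ⟨j, by omega⟩ := rfl
        have h3 : (Fin.castSucc (⟨j, by omega⟩ : Fin L)) = ⟨j, by omega⟩ := rfl
        rw [h2, h1, h3, ih (by omega)]
        simp only [xsol, extu_lt u j (by omega)]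
    have h4 := hy k
    have h5 : (Fin.castSucc k) = (⟨(k : ℕ), by omega⟩ : Fin (L + 1)) := rfl
    rw [h4, h5, key (k : ℕ) (by omega)]
  · rintro ⟨x0, h⟩
    refine ⟨fun j => xsol A B x0 (extu u) (j : ℕ), fun k => ?_, fun k => ?_⟩
    · show xsol A B x0 (extu u) ((Fin.succ k : Fin (L+1)) : ℕ) = _
      have : ((Fin.succ k : Fin (L+1)) : ℕ) = (k : ℕ) + 1 := rfl
      rw [this]
      show A.mulVec _ + B.mulVec (extu u (k : ℕ)) = _
      rw [extu_lt u (k : ℕ) k.isLt]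
      rfl
    · have := h k
      rw [this]
      rfl
-- the trajectory map Φ
section Phi
open Matrix
variable {n m p : ℕ} (A : Matrix (Fin n) (Fin n) ℝ) (B : Matrix (Fin n) (Fin m) ℝ)
  (C : Matrix (Fin p) (Fin n) ℝ) (D : Matrix (Fin p) (Fin m) ℝ) (L : ℕ)

/-- Output of the system started at `x0` with input `u`. -/
def outSol (x0 : Fin n → ℝ) (u : Fin L → Fin m → ℝ) : Fin L → Fin p → ℝ :=
  fun k => C.mulVec (xsol A B x0 (extu u) (k : ℕ)) + D.mulVec (u k)

def phiFun (v : (Fin n ⊕ Fin L × Fin m) → ℝ) : Fin (m * L + p * L) → ℝ :=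
  stackVec (fun k r => v (Sum.inr (k, r)))
    (outSol A B C D L (fun s => v (Sum.inl s)) (fun k r => v (Sum.inr (k, r))))

lemma extu_add {L q : ℕ} (u u' : Fin L → Fin q → ℝ) :
    extu (u + u') = extu u + extu u' := by
  funext k; by_cases h : k < L <;> simp [extu, h]

lemma extu_smul {L q : ℕ} (c : ℝ) (u : Fin L → Fin q → ℝ) :
    extu (c • u) = c • extu u := by
  funext k; by_cases h : k < L <;> simp [extu, h]

lemma outSol_add (x0 x0' : Fin n → ℝ) (u u' : Fin L → Fin m → ℝ) :
    outSol A B C D L (x0 + x0') (u + u') =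
      outSol A B C D L x0 u + outSol A B C D L x0' u' := by
  funext k
  simp only [outSol, extu_add, xsol_add, Pi.add_apply, Matrix.mulVec_add]
  abel

lemma outSol_smul (c : ℝ) (x0 : Fin n → ℝ) (u : Fin L → Fin m → ℝ) :
    outSol A B C D L (c • x0) (c • u) = c • outSol A B C D L x0 u := by
  funext k
  simp only [outSol, extu_smul, xsol_smul, Pi.smul_apply, Matrix.mulVec_smul]
  simp [smul_add]

noncomputable def phiLin : ((Fin n ⊕ Fin L × Fin m) → ℝ) →ₗ[ℝ] (Fin (m * L + p * L) → ℝ) where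
  toFun := phiFun A B C D L
  map_add' v w := by
    simp only [phiFun]
    rw [← stackVec_add, ← outSol_add]
    rfl
  map_smul' c v := by
    simp only [phiFun, RingHom.id_apply]
    rw [← stackVec_smul, ← outSol_smul]
    rfl

lemma range_phiFun :
    Set.range (phiFun A B C D L) =
      {z | ∃ (u : Fin L → Fin m → ℝ) (y : Fin L → Fin p → ℝ),
        IsTrajectory A B C D u y ∧ z = stackVec u y} := by
  ext z
  constructor
  · rintro ⟨v, rfl⟩
    refine ⟨fun k r => v (Sum.inr (k, r)), outSol A B C D L (fun s => v (Sum.inl s)) _,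
      ?_, rfl⟩
    rw [isTrajectory_iff]
    exact ⟨fun s => v (Sum.inl s), fun k => rfl⟩
  · rintro ⟨u, y, htraj, rfl⟩
    rw [isTrajectory_iff] at htraj
    obtain ⟨x0, hx0⟩ := htraj
    refine ⟨Sum.elim x0 (fun kr => u kr.1 kr.2), ?_⟩
    have h2 : outSol A B C D L x0 u = y := funext fun k => (hx0 k).symm
    show stackVec u (outSol A B C D L x0 u) = stackVec u y
    rw [h2]
end Phi
-- injectivity of Φ
section PhiInj
open Matrix
variable {n m p : ℕ} (A : Matrix (Fin n) (Fin n) ℝ) (B : Matrix (Fin n) (Fin m) ℝ)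
  (C : Matrix (Fin p) (Fin n) ℝ) (D : Matrix (Fin p) (Fin m) ℝ) (L : ℕ)

lemma stackVec_zero {L m p : ℕ} : stackVec (0 : Fin L → Fin m → ℝ) (0 : Fin L → Fin p → ℝ) = 0 := by
  funext i
  simp only [stackVec]
  have h1 : flatten (0 : Fin L → Fin m → ℝ) = 0 := rfl
  have h2 : flatten (0 : Fin L → Fin p → ℝ) = 0 := rfl
  rw [h1, h2]
  induction i using Fin.addCases with
  | left i => simp [Fin.append_left]
  | right i => simp [Fin.append_right]

lemma extu_zero {L q : ℕ} : extu (0 : Fin L → Fin q → ℝ) = 0 := by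
  funext k; by_cases h : k < L <;> simp [extu, h]

lemma phiFun_inj (hobsL : (obsMat A C L).rank = n) :
    Function.Injective (phiLin A B C D L) := by
  rw [← LinearMap.ker_eq_bot, LinearMap.ker_eq_bot']
  intro v hv
  have hv' : stackVec (fun k r => v (Sum.inr (k, r)))
      (outSol A B C D L (fun s => v (Sum.inl s)) (fun k r => v (Sum.inr (k, r)))) = 0 := hv
  rw [← stackVec_zero] at hv'
  obtain ⟨hu, hy⟩ := stackVec_inj hv'
  set x0 : Fin n → ℝ := fun s => v (Sum.inl s) with hx0def
  have hobs0 : (obsMat A C L).mulVec x0 = 0 := by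
    funext kρ
    obtain ⟨k, ρ⟩ := kρ
    have hyk := congrFun hy k
    rw [hu] at hyk
    simp only [outSol, extu_zero, xsol_zero_input, Pi.zero_apply, Matrix.mulVec_zero,
      add_zero] at hyk
    have hyk2 := congrFun hyk ρ
    show ((C * A ^ (k : ℕ)).mulVec x0) ρ = 0
    rw [← Matrix.mulVec_mulVec]
    exact hyk2
  have hcard : (obsMat A C L).rank = Fintype.card (Fin n) := by simpa using hobsL
  have hinj := fullCol_inj (obsMat A C L) hcard
  have hx00 : x0 = 0 := by
    have := hinj (a₂ := 0) (by simpa using hobs0)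
    simpa using this
  funext i
  cases i with
  | inl s => exact congrFun hx00 s
  | inr kr => exact congrFun (congrFun hu kr.1) kr.2
end PhiInj
-- data-trajectory machinery
section Data
open Matrix
variable {n m p T : ℕ} (A : Matrix (Fin n) (Fin n) ℝ) (B : Matrix (Fin n) (Fin m) ℝ)
  (C : Matrix (Fin p) (Fin n) ℝ) (D : Matrix (Fin p) (Fin m) ℝ)
  (ud : Fin T → Fin m → ℝ) (yd : Fin T → Fin p → ℝ)
  (xd : Fin (T + 1) → Fin n → ℝ)

/-- Extension of the data state to ℕ. -/
def xNof {n T : ℕ} (xd : Fin (T + 1) → Fin n → ℝ) : ℕ → Fin n → ℝ :=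
  fun k => if h : k < T + 1 then xd ⟨k, h⟩ else 0

lemma xNof_lt (k : ℕ) (h : k < T + 1) : xNof xd k = xd ⟨k, h⟩ := dif_pos h

variable (hx : ∀ k : Fin T, xd k.succ = A.mulVec (xd k.castSucc) + B.mulVec (ud k))
  (hy : ∀ k : Fin T, yd k = C.mulVec (xd k.castSucc) + D.mulVec (ud k))

include hx in
lemma xNof_step (k : ℕ) (h : k < T) :
    xNof xd (k + 1) = A.mulVec (xNof xd k) + B.mulVec (extu ud k) := by
  rw [xNof_lt xd k (by omega), xNof_lt xd (k+1) (by omega), extu_lt ud k h]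
  have := hx ⟨k, h⟩
  have h2 : (Fin.succ (⟨k, h⟩ : Fin T)) = ⟨k + 1, by omega⟩ := rfl
  have h3 : (Fin.castSucc (⟨k, h⟩ : Fin T)) = ⟨k, by omega⟩ := rfl
  rw [h2, h3] at this
  exact this

include hx in
lemma xNof_trans (j k : ℕ) (h : j + k ≤ T) :
    xNof xd (j + k) = xsol A B (xNof xd j) (fun t => extu ud (j + t)) k := by
  induction k with
  | zero => rfl
  | succ k ih =>
    have : j + (k + 1) = (j + k) + 1 := by omega
    rw [this, xNof_step A B ud xd hx (j + k) (by omega), ih (by omega)]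
    rfl

include hy in
lemma yd_eq (k : ℕ) (h : k < T) :
    yd ⟨k, h⟩ = C.mulVec (xNof xd k) + D.mulVec (extu ud k) := by
  rw [xNof_lt xd k (by omega), extu_lt ud k h]
  have := hy ⟨k, h⟩
  have h3 : (Fin.castSucc (⟨k, h⟩ : Fin T)) = ⟨k, by omega⟩ := rfl
  rw [h3] at this
  exact this

include hx hy in
/-- The window of the data starting at `j` is produced by `outSol` from state `xNof xd j`. -/
lemma window_outSol (L : ℕ) (j : ℕ) (hj : j + L ≤ T) (k : Fin L) :
    outSol A B C D L (xNof xd j)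
      (fun k' : Fin L => extu ud ((k' : ℕ) + j)) k =
      yd ⟨(k : ℕ) + j, by have := k.isLt; omega⟩ := by
  have hk := k.isLt
  have e1 : (⟨(k : ℕ) + j, by omega⟩ : Fin T) = ⟨j + (k : ℕ), by omega⟩ := by
    apply Fin.ext; simp [Nat.add_comm]
  rw [e1, yd_eq C D ud yd xd hy (j + (k : ℕ)) (by omega),
    xNof_trans A B ud xd hx j (k : ℕ) (by omega)]
  simp only [outSol]
  have hx2 : xsol A B (xNof xd j) (extu (fun k' : Fin L => extu ud ((k' : ℕ) + j))) (k : ℕ)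
      = xsol A B (xNof xd j) (fun t => extu ud (j + t)) (k : ℕ) := by
    apply xsol_congr
    intro t ht
    rw [extu_lt _ t (by omega)]
    simp only [Nat.add_comm t j]
  rw [hx2]
  have hu2 : extu ud ((k : ℕ) + j) = extu ud (j + (k : ℕ)) := by rw [Nat.add_comm]
  rw [hu2]
end Data
-- key lemma support
section KeySupport
open Matrix Finset

lemma dotProduct_sum'' {κ : Type} [Fintype κ] {ι : Type} (s : Finset ι) (η : κ → ℝ)
    (v : ι → κ → ℝ) : η ⬝ᵥ (∑ i ∈ s, v i) = ∑ i ∈ s, η ⬝ᵥ v i := by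
  simp only [dotProduct, Finset.sum_apply, Finset.mul_sum]
  exact Finset.sum_comm

lemma vecMul_sum'' {a b : ℕ} {ι : Type} (s : Finset ι) (η : Fin a → ℝ)
    (M : ι → Matrix (Fin a) (Fin b) ℝ) :
    η ᵥ* (∑ i ∈ s, M i) = ∑ i ∈ s, η ᵥ* M i := by
  funext j
  show η ⬝ᵥ (fun i' => (∑ i ∈ s, M i) i' j) = _
  have hfe : (fun i' => (∑ i ∈ s, M i) i' j) = ∑ i ∈ s, (fun i' => M i i' j) := by
    funext i'
    simp [Matrix.sum_apply]
  rw [hfe, dotProduct_sum'', Finset.sum_apply]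
  rfl

lemma xsol_formula {n m : ℕ} (A : Matrix (Fin n) (Fin n) ℝ) (B : Matrix (Fin n) (Fin m) ℝ)
    (x0 : Fin n → ℝ) (u : ℕ → Fin m → ℝ) (i : ℕ) :
    xsol A B x0 u i = (A ^ i).mulVec x0
      + ∑ t ∈ Finset.range i, (A ^ (i - 1 - t) * B).mulVec (u t) := by
  induction i with
  | zero => simp [xsol]
  | succ i ih =>
    rw [show xsol A B x0 u (i+1) = A.mulVec (xsol A B x0 u i) + B.mulVec (u i) from rfl, ih]
    rw [Matrix.mulVec_add, Finset.sum_range_succ]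
    have h1 : A.mulVec ((A ^ i).mulVec x0) = (A ^ (i+1)).mulVec x0 := by
      rw [Matrix.mulVec_mulVec, ← pow_succ']
    have h2 : A.mulVec (∑ t ∈ Finset.range i, (A ^ (i - 1 - t) * B).mulVec (u t))
        = ∑ t ∈ Finset.range i, (A ^ (i + 1 - 1 - t) * B).mulVec (u t) := by
      show A.mulVecLin _ = _
      rw [map_sum]
      refine Finset.sum_congr rfl fun t ht => ?_
      have ht' : t < i := Finset.mem_range.mp ht
      show A.mulVec ((A ^ (i - 1 - t) * B).mulVec (u t)) = _
      have hmm : A * (A ^ (i - 1 - t) * B) = A ^ (i + 1 - 1 - t) * B := by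
        rw [show i + 1 - 1 - t = (i - 1 - t) + 1 by omega, pow_succ', Matrix.mul_assoc]
      rw [Matrix.mulVec_mulVec, hmm]
    have h3 : (A ^ (i + 1 - 1 - i) * B) = B := by
      simp
    rw [h1, h2, h3]
    abel

/-- The block row-vector used in the persistency-of-excitation argument. -/
def wv {n m L : ℕ} (A : Matrix (Fin n) (Fin n) ℝ) (B : Matrix (Fin n) (Fin m) ℝ)
    (η : Fin n → ℝ) (ξ : Fin L → Fin m → ℝ) (i b : ℕ) : Fin m → ℝ :=
  if b < i then η ᵥ* (A ^ (i - 1 - b) * B)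
  else if h : b - i < L then ξ ⟨b - i, h⟩ else 0

lemma wv_lt {n m L : ℕ} (A : Matrix (Fin n) (Fin n) ℝ) (B : Matrix (Fin n) (Fin m) ℝ)
    (η : Fin n → ℝ) (ξ : Fin L → Fin m → ℝ) {i b : ℕ} (h : b < i) :
    wv A B η ξ i b = η ᵥ* (A ^ (i - 1 - b) * B) := if_pos h

lemma wv_mid {n m L : ℕ} (A : Matrix (Fin n) (Fin n) ℝ) (B : Matrix (Fin n) (Fin m) ℝ)
    (η : Fin n → ℝ) (ξ : Fin L → Fin m → ℝ) {i b : ℕ} (h1 : ¬ b < i) (h2 : b - i < L) :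
    wv A B η ξ i b = ξ ⟨b - i, h2⟩ := by rw [wv, if_neg h1, dif_pos h2]

lemma wv_ge {n m L : ℕ} (A : Matrix (Fin n) (Fin n) ℝ) (B : Matrix (Fin n) (Fin m) ℝ)
    (η : Fin n → ℝ) (ξ : Fin L → Fin m → ℝ) {i b : ℕ} (h1 : ¬ b < i) (h2 : ¬ (b - i < L)) :
    wv A B η ξ i b = 0 := by rw [wv, if_neg h1, dif_neg h2]

/-- The big mosaic matrix `[X; H_L(u)]` (state on top). -/
def bigM {n m T : ℕ} (L : ℕ) (ud : Fin T → Fin m → ℝ) (xd : Fin (T + 1) → Fin n → ℝ) :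
    Matrix (Fin n ⊕ Fin L × Fin m) (Fin (T - L + 1)) ℝ :=
  fun i j => Sum.elim (fun s => xNof xd (j : ℕ) s)
    (fun kr => extu ud ((kr.1 : ℕ) + (j : ℕ)) kr.2) i

end KeySupport
section Key
open Matrix Finset

lemma sum_dotProduct'' {κ : Type} [Fintype κ] {ι : Type} (s : Finset ι) (v : ι → κ → ℝ)
    (x : κ → ℝ) : (∑ i ∈ s, v i) ⬝ᵥ x = ∑ i ∈ s, v i ⬝ᵥ x := by
  simp only [dotProduct, Finset.sum_apply, Finset.sum_mul]
  exact Finset.sum_comm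

lemma vecMul_matSmul {a b : ℕ} (c : ℝ) (η : Fin a → ℝ) (M : Matrix (Fin a) (Fin b) ℝ) :
    η ᵥ* (c • M) = c • (η ᵥ* M) := by
  funext j
  show (∑ i, η i * (c * M i j)) = c * ∑ i, η i * M i j
  rw [Finset.mul_sum]
  exact Finset.sum_congr rfl fun i _ => by ring

lemma bigM_rank {n m T L : ℕ}
    (A : Matrix (Fin n) (Fin n) ℝ) (B : Matrix (Fin n) (Fin m) ℝ)
    (hL : 1 ≤ L) (hLnT : L + n ≤ T)
    (ud : Fin T → Fin m → ℝ) (xd : Fin (T + 1) → Fin n → ℝ)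
    (hx : ∀ k : Fin T, xd k.succ = A.mulVec (xd k.castSucc) + B.mulVec (ud k))
    (hctrb : (ctrbMat A B).rank = n)
    (hpe : (Hankel (L + n) hLnT ud).rank = m * (L + n)) :
    (bigM L ud xd).rank = Fintype.card (Fin n ⊕ Fin L × Fin m) := by
  apply fullRow_of_vecMul
  intro v hv
  set η : Fin n → ℝ := fun s => v (Sum.inl s) with hηdef
  set ξ : Fin L → Fin m → ℝ := fun k r => v (Sum.inr (k, r)) with hξdef
  -- Step 1: the defining relations, in ℕ-indexed form
  have hyp : ∀ j : ℕ, j + L ≤ T →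
      η ⬝ᵥ xNof xd j + ∑ k : Fin L, ξ k ⬝ᵥ extu ud ((k : ℕ) + j) = 0 := by
    intro j hj
    have hvj := congrFun hv (⟨j, by omega⟩ : Fin (T - L + 1))
    have he : ((v ᵥ* bigM L ud xd) (⟨j, by omega⟩ : Fin (T - L + 1)) : ℝ)
        = η ⬝ᵥ xNof xd j + ∑ k : Fin L, ξ k ⬝ᵥ extu ud ((k : ℕ) + j) := by
      show (∑ i : Fin n ⊕ Fin L × Fin m, v i * bigM L ud xd i ⟨j, by omega⟩) = _
      rw [Fintype.sum_sum_type, Fintype.sum_prod_type]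
      rfl
    rw [he] at hvj
    simpa using hvj
  -- Step 2: shifted relations expressed through `wv`
  have key : ∀ i, i ≤ n → ∀ j, j + L + n ≤ T →
      ∑ b ∈ range (L + n), wv A B η ξ i b ⬝ᵥ extu ud (b + j)
        = -(η ⬝ᵥ ((A ^ i) *ᵥ (xNof xd j))) := by
    intro i hi j hj
    have h1 := hyp (j + i) (by omega)
    have h2 : xNof xd (j + i) = xsol A B (xNof xd j) (fun t => extu ud (j + t)) i :=
      xNof_trans A B ud xd hx j i (by omega)
    rw [h2, xsol_formula, dotProduct_add, dotProduct_sum''] at h1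
    have h3 : ∀ t ∈ range i, η ⬝ᵥ ((A ^ (i - 1 - t) * B) *ᵥ extu ud (j + t))
        = wv A B η ξ i t ⬝ᵥ extu ud (t + j) := by
      intro t ht
      rw [Matrix.dotProduct_mulVec, wv_lt A B η ξ (mem_range.mp ht), Nat.add_comm j t]
    rw [Finset.sum_congr rfl h3] at h1
    have h4 : ∀ k : Fin L, ξ k ⬝ᵥ extu ud ((k : ℕ) + (j + i))
        = wv A B η ξ i ((k : ℕ) + i) ⬝ᵥ extu ud (((k : ℕ) + i) + j) := by
      intro k
      have hcase : (k : ℕ) + i - i < L := by have := k.isLt; omega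
      rw [wv_mid A B η ξ (by omega) hcase]
      have e : (⟨(k : ℕ) + i - i, hcase⟩ : Fin L) = k := Fin.ext (by simp)
      rw [e, show (k : ℕ) + i + j = (k : ℕ) + (j + i) by omega]
    rw [Finset.sum_congr rfl (fun k _ => h4 k)] at h1
    have hsplit : ∑ b ∈ range (L + n), wv A B η ξ i b ⬝ᵥ extu ud (b + j)
        = (∑ b ∈ range i, wv A B η ξ i b ⬝ᵥ extu ud (b + j))
          + (∑ k : Fin L, wv A B η ξ i ((k : ℕ) + i) ⬝ᵥ extu ud (((k : ℕ) + i) + j)) := by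
      rw [Finset.range_eq_Ico,
        ← Finset.sum_Ico_consecutive _ (Nat.zero_le i) (show i ≤ L + n by omega),
        ← Finset.sum_Ico_consecutive _ (show i ≤ i + L by omega) (show i + L ≤ L + n by omega)]
      have hz : ∑ b ∈ Finset.Ico (i + L) (L + n),
          wv A B η ξ i b ⬝ᵥ extu ud (b + j) = 0 := by
        apply Finset.sum_eq_zero
        intro b hb
        have hb' := Finset.mem_Ico.mp hb
        rw [wv_ge A B η ξ (by omega) (by omega)]
        exact zero_dotProduct _
      rw [hz, add_zero, ← Finset.range_eq_Ico]
      congr 1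
      rw [Finset.sum_Ico_eq_sum_range, show i + L - i = L by omega,
        ← Fin.sum_univ_eq_sum_range
          (fun t => wv A B η ξ i (i + t) ⬝ᵥ extu ud ((i + t) + j)) L]
      exact Finset.sum_congr rfl fun k _ => by rw [Nat.add_comm i (k : ℕ)]
    rw [hsplit]
    linarith [h1]
  -- Step 3: Cayley–Hamilton coefficients
  obtain ⟨c, hc0, hcn⟩ : ∃ c : ℕ → ℝ,
      (∑ i ∈ range (n + 1), c i • A ^ i) = 0 ∧ c n = 1 := by
    refine ⟨fun i => A.charpoly.coeff i, ?_, ?_⟩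
    · have h := Matrix.aeval_self_charpoly A
      rw [Polynomial.aeval_eq_sum_range, Matrix.charpoly_natDegree_eq_dim,
        Fintype.card_fin] at h
      exact h
    · have h1 := Matrix.charpoly_monic A
      have h2 : A.charpoly.natDegree = n := by
        rw [Matrix.charpoly_natDegree_eq_dim, Fintype.card_fin]
      have h3 := h1.coeff_natDegree
      rwa [h2] at h3
  -- Step 4: the combined left-kernel vector of the deep Hankel matrix
  have hW0 : (fun br : Fin (L + n) × Fin m =>
      ∑ i ∈ range (n + 1), c i * wv A B η ξ i (br.1 : ℕ) br.2) ᵥ*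
        Hankel (L + n) hLnT ud = 0 := by
    funext j
    have hjT : (j : ℕ) + L + n ≤ T := by have := j.isLt; omega
    have expand : ((fun br : Fin (L + n) × Fin m =>
        ∑ i ∈ range (n + 1), c i * wv A B η ξ i (br.1 : ℕ) br.2) ᵥ*
          Hankel (L + n) hLnT ud) j
        = ∑ i ∈ range (n + 1),
            c i * (∑ b ∈ range (L + n), wv A B η ξ i b ⬝ᵥ extu ud (b + (j : ℕ))) := by
      show (∑ br : Fin (L + n) × Fin m,
          (∑ i ∈ range (n + 1), c i * wv A B η ξ i (br.1 : ℕ) br.2)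
            * Hankel (L + n) hLnT ud br j) = _
      rw [Fintype.sum_prod_type]
      have hH : ∀ (b : Fin (L + n)) (r : Fin m),
          Hankel (L + n) hLnT ud (b, r) j = extu ud ((b : ℕ) + (j : ℕ)) r := by
        intro b r
        rw [extu_lt ud _ (by have := b.isLt; have := j.isLt; omega)]
        rfl
      calc ∑ b : Fin (L + n), ∑ r : Fin m,
            (∑ i ∈ range (n + 1), c i * wv A B η ξ i (b : ℕ) r)
              * Hankel (L + n) hLnT ud (b, r) j
          = ∑ b : Fin (L + n), ∑ i ∈ range (n + 1), ∑ r : Fin m,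
              c i * (wv A B η ξ i (b : ℕ) r * extu ud ((b : ℕ) + (j : ℕ)) r) := by
            refine Finset.sum_congr rfl fun b _ => ?_
            rw [← Finset.sum_comm]
            refine Finset.sum_congr rfl fun r _ => ?_
            rw [hH b r, Finset.sum_mul]
            exact Finset.sum_congr rfl fun i _ => by ring
        _ = ∑ i ∈ range (n + 1), c i *
              ∑ b : Fin (L + n), wv A B η ξ i (b : ℕ) ⬝ᵥ extu ud ((b : ℕ) + (j : ℕ)) := by
            rw [Finset.sum_comm]
            refine Finset.sum_congr rfl fun i _ => ?_
            rw [Finset.mul_sum]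
            refine Finset.sum_congr rfl fun b _ => ?_
            simp only [dotProduct, Finset.mul_sum]
        _ = ∑ i ∈ range (n + 1),
              c i * (∑ b ∈ range (L + n), wv A B η ξ i b ⬝ᵥ extu ud (b + (j : ℕ))) := by
            refine Finset.sum_congr rfl fun i _ => ?_
            congr 1
            exact Fin.sum_univ_eq_sum_range
              (fun b => wv A B η ξ i b ⬝ᵥ extu ud (b + (j : ℕ))) (L + n)
    rw [show ((0 : Fin (T - (L + n) + 1) → ℝ) j) = (0 : ℝ) from rfl] at *
    rw [expand]
    have hkey : ∀ i ∈ range (n + 1),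
        c i * (∑ b ∈ range (L + n), wv A B η ξ i b ⬝ᵥ extu ud (b + (j : ℕ)))
          = -((η ᵥ* (c i • A ^ i)) ⬝ᵥ xNof xd (j : ℕ)) := by
      intro i hi
      rw [key i (by have := mem_range.mp hi; omega) (j : ℕ) hjT,
        Matrix.dotProduct_mulVec, vecMul_matSmul, smul_dotProduct,
        smul_eq_mul]
      ring
    rw [Finset.sum_congr rfl hkey, Finset.sum_neg_distrib,
      ← sum_dotProduct'', ← vecMul_sum'', hc0]
    simp
  -- Step 5: persistency of excitation kills the combined vector
  have hcard : (Hankel (L + n) hLnT ud).rank = Fintype.card (Fin (L + n) × Fin m) := by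
    rw [hpe]; simp [Nat.mul_comm]
  have hWz := fullRow_vecMul_eq_zero _ hcard _ hW0
  have hWzero : ∀ b : ℕ, b < L + n → ∀ r : Fin m,
      ∑ i ∈ range (n + 1), c i * wv A B η ξ i b r = 0 := by
    intro b hb r
    exact congrFun hWz (⟨b, hb⟩, r)
  -- Step 6: ξ = 0, by downward induction on the block index
  have hξaux : ∀ t : ℕ, ∀ d : ℕ, ∀ hd : d < L, L - d ≤ t → ξ ⟨d, hd⟩ = 0 := by
    intro t
    induction t with
    | zero => intro d hd h; omega
    | succ t ih =>
      intro d hd hLd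
      funext r
      have h0 := hWzero (n + d) (by omega) r
      rw [Finset.sum_range_succ] at h0
      have hmidc : n + d - n < L := by omega
      have hn0 : wv A B η ξ n (n + d) r = ξ ⟨d, hd⟩ r := by
        rw [wv_mid A B η ξ (by omega) hmidc]
        have e : (⟨n + d - n, hmidc⟩ : Fin L) = ⟨d, hd⟩ := Fin.ext (by simp)
        rw [e]
      have hz : ∀ i ∈ range n, c i * wv A B η ξ i (n + d) r = 0 := by
        intro i hi
        have hi' := Finset.mem_range.mp hi
        by_cases hcase : n + d - i < L
        · rw [wv_mid A B η ξ (by omega) hcase]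
          have hzz : ξ ⟨n + d - i, hcase⟩ = 0 := ih (n + d - i) hcase (by omega)
          rw [hzz]
          simp
        · rw [wv_ge A B η ξ (by omega) hcase]
          simp
      rw [Finset.sum_eq_zero hz, hcn, hn0] at h0
      simpa using h0
  have hξ0 : ξ = 0 := by
    funext k r
    have h := hξaux (L - (k : ℕ)) (k : ℕ) k.isLt (le_refl _)
    have e : (⟨(k : ℕ), k.isLt⟩ : Fin L) = k := Fin.ext rfl
    rw [e] at h
    rw [h]
    rfl
  -- Step 7: η kills the controllability matrix, by strong induction
  have hAB : ∀ k : ℕ, k < n → η ᵥ* (A ^ k * B) = 0 := by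
    intro k
    induction k using Nat.strong_induction_on with
    | _ k ih =>
      intro hk
      funext r
      have h0 := hWzero (n - 1 - k) (by omega) r
      rw [Finset.sum_range_succ] at h0
      have hbn : n - 1 - k < n := by omega
      have hn0 : wv A B η ξ n (n - 1 - k) r = (η ᵥ* (A ^ k * B)) r := by
        rw [wv_lt A B η ξ hbn, show n - 1 - (n - 1 - k) = k by omega]
      have hz : ∀ i ∈ range n, c i * wv A B η ξ i (n - 1 - k) r = 0 := by
        intro i hi
        have hi' := Finset.mem_range.mp hi
        by_cases hcase : n - 1 - k < i
        · rw [wv_lt A B η ξ hcase]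
          have he : i - 1 - (n - 1 - k) < k := by omega
          rw [ih (i - 1 - (n - 1 - k)) he (by omega)]
          simp
        · by_cases h2 : n - 1 - k - i < L
          · rw [wv_mid A B η ξ hcase h2]
            have : ξ ⟨n - 1 - k - i, h2⟩ = 0 := by rw [hξ0]; rfl
            rw [this]
            simp
          · rw [wv_ge A B η ξ hcase h2]
            simp
      rw [Finset.sum_eq_zero hz, hcn, hn0] at h0
      simpa using h0
  have hctrb0 : η ᵥ* ctrbMat A B = 0 := by
    funext qr
    obtain ⟨q, r⟩ := qr
    exact congrFun (hAB (q : ℕ) q.isLt) r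
  have hη0 : η = 0 := fullRow_vecMul_eq_zero (ctrbMat A B) (by simpa using hctrb) η hctrb0
  -- conclude
  funext i
  cases i with
  | inl s => exact congrFun hη0 s
  | inr kr => exact congrFun (congrFun hξ0 kr.1) kr.2
end Key
-- final assembly helper
section Assemble
open Matrix

lemma column_identity {n m p T : ℕ} (A : Matrix (Fin n) (Fin n) ℝ)
    (B : Matrix (Fin n) (Fin m) ℝ) (C : Matrix (Fin p) (Fin n) ℝ)
    (D : Matrix (Fin p) (Fin m) ℝ) (L : ℕ) (hLT : L ≤ T)
    (ud : Fin T → Fin m → ℝ) (yd : Fin T → Fin p → ℝ)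
    (xd : Fin (T + 1) → Fin n → ℝ)
    (hx : ∀ k : Fin T, xd k.succ = A.mulVec (xd k.castSucc) + B.mulVec (ud k))
    (hy : ∀ k : Fin T, yd k = C.mulVec (xd k.castSucc) + D.mulVec (ud k))
    (j : Fin (T - L + 1)) :
    (fun i => stackedHankel L hLT ud yd i j)
      = phiFun A B C D L (fun i => bigM L ud xd i j) := by
  have hjT : (j : ℕ) + L ≤ T := by have := j.isLt; omega
  show (fun i => stackedHankel L hLT ud yd i j) = stackVec
      (fun (k : Fin L) (r : Fin m) => extu ud ((k : ℕ) + (j : ℕ)) r)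
      (outSol A B C D L (xNof xd (j : ℕ))
        (fun (k : Fin L) (r : Fin m) => extu ud ((k : ℕ) + (j : ℕ)) r))
  have hu : (fun (k : Fin L) (r : Fin m) => extu ud ((k : ℕ) + (j : ℕ)) r)
      = fun k : Fin L => ud ⟨(k : ℕ) + (j : ℕ), by have := k.isLt; omega⟩ := by
    funext k r
    rw [extu_lt ud _ (by have := k.isLt; omega)]
  have hyw : outSol A B C D L (xNof xd (j : ℕ))
      (fun (k : Fin L) (r : Fin m) => extu ud ((k : ℕ) + (j : ℕ)) r)
      = fun k : Fin L => yd ⟨(k : ℕ) + (j : ℕ), by have := k.isLt; omega⟩ := by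
    funext k
    have h := window_outSol A B C D ud yd xd hx hy L (j : ℕ) hjT k
    have e : (fun (k' : Fin L) (r : Fin m) => extu ud ((k' : ℕ) + (j : ℕ)) r)
        = fun k' : Fin L => extu ud ((k' : ℕ) + (j : ℕ)) := rfl
    rw [e]; exact h
  rw [hyw]
  conv_lhs => rw [show (fun i => stackedHankel L hLT ud yd i j) = stackVec
    (fun k : Fin L => ud ⟨(k : ℕ) + (j : ℕ), by have := k.isLt; have := j.isLt; omega⟩)
    (fun k : Fin L => yd ⟨(k : ℕ) + (j : ℕ), by have := k.isLt; have := j.isLt; omega⟩)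
    from rfl]
  rw [hu]
end Assemble
/-- **Willems' Fundamental Lemma.** Let `(ud, yd)` be a length-`T` trajectory of a
controllable and observable LTI system `(A, B, C, D)` of state dimension `n`, and let
`L ≥ 1` with `rank O_L = n`. If the input `ud` is persistently exciting of order `L + n`
(the depth-`(L+n)` block Hankel matrix of `ud` has full row rank `m * (L + n)`), then the
column space of the stacked Hankel matrix `col(H_L(ud), H_L(yd))` equals the subspace of
all stacked length-`L` trajectories `col(u, y)` of the system; equivalently, its rank is
`m * L + n`. -/
theorem willems_fundamental_lemma
    (n m p T L : ℕ) (hL : 1 ≤ L) (hLnT : L + n ≤ T)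
    (A : Matrix (Fin n) (Fin n) ℝ) (B : Matrix (Fin n) (Fin m) ℝ)
    (C : Matrix (Fin p) (Fin n) ℝ) (D : Matrix (Fin p) (Fin m) ℝ)
    (hctrb : (ctrbMat A B).rank = n)
    (hobs : (obsMat A C n).rank = n)
    (hobsL : (obsMat A C L).rank = n)
    (ud : Fin T → Fin m → ℝ) (yd : Fin T → Fin p → ℝ)
    (hd : IsTrajectory A B C D ud yd)
    (hpe : (Hankel (L + n) hLnT ud).rank = m * (L + n)) :
    ({z | ∃ c : Fin (T - L + 1) → ℝ,
        z = (stackedHankel L (by omega) ud yd).mulVec c} =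
      {z | ∃ (u : Fin L → Fin m → ℝ) (y : Fin L → Fin p → ℝ),
        IsTrajectory A B C D u y ∧ z = stackVec u y}) ∧
    (stackedHankel L (by omega : L ≤ T) ud yd).rank = m * L + n := by
  obtain ⟨xd, hx, hy⟩ := hd
  have hLT : L ≤ T := by omega
  have hcomp : (stackedHankel L (by omega : L ≤ T) ud yd).mulVecLin
      = (phiLin A B C D L).comp (bigM L ud xd).mulVecLin := by
    apply Module.Basis.ext (Pi.basisFun ℝ (Fin (T - L + 1)))
    intro j
    rw [Pi.basisFun_apply]
    show (stackedHankel L (by omega : L ≤ T) ud yd).mulVec (Pi.single j 1)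
        = phiLin A B C D L ((bigM L ud xd).mulVec (Pi.single j 1))
    rw [Matrix.mulVec_single, Matrix.mulVec_single]
    have h1 : (fun i => stackedHankel L (by omega : L ≤ T) ud yd i j * 1)
        = fun i => stackedHankel L (by omega : L ≤ T) ud yd i j := by funext i; ring
    have h2 : (fun i => bigM L ud xd i j * 1) = fun i => bigM L ud xd i j := by
      funext i; ring
    simp only [MulOpposite.op_one, one_smul]
    exact column_identity A B C D L (by omega) ud yd xd hx hy j
  have hsurj : Function.Surjective (bigM L ud xd).mulVecLin :=
    fullRow_surj _ (bigM_rank A B hL hLnT ud xd hx hctrb hpe)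
  have hinj : Function.Injective (phiLin A B C D L) := phiFun_inj A B C D L hobsL
  constructor
  · ext z
    simp only [Set.mem_setOf_eq]
    constructor
    · rintro ⟨cc, rfl⟩
      have h := DFunLike.congr_fun hcomp cc
      have hz : (stackedHankel L (by omega : L ≤ T) ud yd).mulVec cc
          ∈ Set.range (phiFun A B C D L) := ⟨(bigM L ud xd).mulVec cc, h.symm⟩
      rw [range_phiFun A B C D L] at hz
      exact hz
    · rintro ⟨u, y, htraj, rfl⟩
      have hz : stackVec u y ∈ Set.range (phiFun A B C D L) := by
        rw [range_phiFun A B C D L]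
        exact ⟨u, y, htraj, rfl⟩
      obtain ⟨vv, hvv⟩ := hz
      obtain ⟨cc, hcc⟩ := hsurj vv
      refine ⟨cc, ?_⟩
      have h := DFunLike.congr_fun hcomp cc
      calc stackVec u y = phiFun A B C D L vv := hvv.symm
        _ = phiLin A B C D L ((bigM L ud xd).mulVecLin cc) := by rw [hcc]; rfl
        _ = (stackedHankel L (by omega : L ≤ T) ud yd).mulVec cc := h.symm
  · have hr : (stackedHankel L (by omega : L ≤ T) ud yd).rank
      = Module.finrank ℝ (LinearMap.range
          ((phiLin A B C D L).comp (bigM L ud xd).mulVecLin)) := by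
      rw [rank_eq_finrank_range', hcomp]
    rw [hr, LinearMap.range_comp_of_range_eq_top _ (LinearMap.range_eq_top.mpr hsurj),
      LinearMap.finrank_range_of_inj hinj, Module.finrank_fintype_fun_eq_card]
    have : Fintype.card (Fin n ⊕ Fin L × Fin m) = n + L * m := by simp
    rw [this, Nat.mul_comm]
    omega
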